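/- Let {V_t} be a nonnegative real sequence satisfying V_{t+1} ≤ (1 - α_t) V_t + α_t² C for all t ≥ 0, where C ≥ 0 and α_t = 1/(t+1) for all t ≥ 0. Then V_t ≤ C(1 + ln t)/t for all t ≥ 1. -/

import Mathlib

theorem stmt_0 (V : ℕ → ℝ) (C : ℝ) (hC : 0 ≤ C) (hV : ∀ t, 0 ≤ V t)
    (hrec : ∀ t : ℕ, V (t + 1) ≤ (1 - 1 / (t + 1 : ℝ)) * V t + (1 / (t + 1 : ℝ))^2 * C) :
    ∀ t : ℕ, 1 ≤ t → V t ≤ C * (1 + Real.log t) / t := by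
  intro t ht
  induction t with
  | zero => omega
  | succ n ih =>
    rcases Nat.eq_or_lt_of_le ht with h1 | h1
    · -- n = 0, so t = 1
      have hn : n = 0 := by omega
      subst hn
      have h := hrec 0
      simp at h ⊢
      linarith
    · have hn : 1 ≤ n := by omega
      have ihn := ih hn
      have hnpos : (0:ℝ) < n := by exact_mod_cast hn
      have hn1pos : (0:ℝ) < (n:ℝ) + 1 := by linarith
      have h := hrec n
      -- key: log (n+1) - log n ≥ 1/(n+1)
      have hlog : Real.log ((n:ℝ)/((n:ℝ)+1)) ≤ (n:ℝ)/((n:ℝ)+1) - 1 :=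
        Real.log_le_sub_one_of_pos (by positivity)
      have hlogd : Real.log ((n:ℝ)/((n:ℝ)+1)) = Real.log n - Real.log ((n:ℝ)+1) :=
        Real.log_div (ne_of_gt hnpos) (ne_of_gt hn1pos)
      have hkey : 1/((n:ℝ)+1) ≤ Real.log ((n:ℝ)+1) - Real.log n := by
        rw [hlogd] at hlog
        have : (n:ℝ)/((n:ℝ)+1) - 1 = -(1/((n:ℝ)+1)) := by field_simp; ring
        rw [this] at hlog
        linarith
      -- V(n+1) ≤ (n/(n+1)) V n + C/(n+1)^2
      have hV1 : V (n+1) ≤ (n:ℝ)/((n:ℝ)+1) * V n + C/((n:ℝ)+1)^2 := by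
        have e1 : (1 - 1/((n:ℝ)+1)) = (n:ℝ)/((n:ℝ)+1) := by field_simp; ring
        have e2 : (1/((n:ℝ)+1))^2 * C = C/((n:ℝ)+1)^2 := by field_simp
        rw [e1, e2] at h
        exact h
      have hVn : (n:ℝ)/((n:ℝ)+1) * V n ≤ (n:ℝ)/((n:ℝ)+1) * (C * (1 + Real.log n) / n) := by
        apply mul_le_mul_of_nonneg_left ihn (by positivity)
      have e3 : (n:ℝ)/((n:ℝ)+1) * (C * (1 + Real.log n) / n) = C * (1 + Real.log n) / ((n:ℝ)+1) := by
        field_simp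
      rw [e3] at hVn
      have hCk : C * (1/((n:ℝ)+1)) ≤ C * (Real.log ((n:ℝ)+1) - Real.log n) :=
        mul_le_mul_of_nonneg_left hkey hC
      have h2 : C/((n:ℝ)+1)^2 ≤ C*(Real.log ((n:ℝ)+1) - Real.log n)/((n:ℝ)+1) := by
        have h3 := (div_le_div_iff_of_pos_right hn1pos).mpr hCk
        have e5 : C * (1/((n:ℝ)+1)) / ((n:ℝ)+1) = C/((n:ℝ)+1)^2 := by rw [mul_one_div, div_div, ← sq]
        rwa [e5] at h3
      have e4 : C*(1+Real.log n)/((n:ℝ)+1) + C*(Real.log ((n:ℝ)+1) - Real.log n)/((n:ℝ)+1)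
          = C * (1 + Real.log ((n:ℝ)+1)) / ((n:ℝ)+1) := by ring
      have hgoal : C * (1 + Real.log n) / ((n:ℝ)+1) + C/((n:ℝ)+1)^2
          ≤ C * (1 + Real.log ((n:ℝ)+1)) / ((n:ℝ)+1) := by linarith
      have : ((n+1:ℕ):ℝ) = (n:ℝ) + 1 := by push_cast; ring
      rw [this]
      calc V (n+1) ≤ (n:ℝ)/((n:ℝ)+1) * V n + C/((n:ℝ)+1)^2 := hV1
        _ ≤ C * (1 + Real.log n) / ((n:ℝ)+1) + C/((n:ℝ)+1)^2 := by linarith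
        _ ≤ C * (1 + Real.log ((n:ℝ)+1)) / ((n:ℝ)+1) := hgoal
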